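/- arXiv:1501.00219 — 3 statements merged into one kernel-verified Lean document; each statement's English description precedes it below -/
import Mathlib

section
/- Let N ≥ 2 and let X^1, …, X^N be the random vectors defined from the i.i.d. standard normal family θ_{i,k} by X^k = Σ_{i=1}^n λ_i^{1/2} θ_{i,k} u_i. Then the expected squared Frobenius-norm error of the spectral diagonal approximation D^N satisfies E[‖C − D^N‖_F²] = (2/(N−1)) Σ_{i=1}^n λ_i², where C = Σ_{i=1}^n λ_i u_i u_iᵀ. -/
open MeasureTheory ProbabilityTheory Finset

section Aux
open Real Filter
open scoped ENNReal NNReal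

noncomputable def J (p : ℕ) : ℝ := ∫ x : ℝ, x ^ p * Real.exp (-x ^ 2 / 2)

lemma Jint (p : ℕ) : Integrable (fun x : ℝ => x ^ p * Real.exp (-x ^ 2 / 2)) := by
  have h := integrable_rpow_mul_exp_neg_mul_sq (b := (1:ℝ)/2) (by norm_num) (s := (p : ℝ))
    (lt_of_lt_of_le (by norm_num) (Nat.cast_nonneg p))
  refine h.congr (Eventually.of_forall fun x => ?_)
  simp only [Real.rpow_natCast]
  ring_nf

lemma J0 : J 0 = Real.sqrt (2 * Real.pi) := by
  have h := integral_gaussian (1/2 : ℝ)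
  simp only [J, pow_zero, one_mul]
  rw [show (fun x : ℝ => Real.exp (-x ^ 2 / 2)) = fun x : ℝ => Real.exp (-(1/2) * x ^ 2) by
    funext x; ring_nf] at *
  rw [h]
  rw [show Real.pi / (1/2) = 2 * Real.pi by ring]

lemma tendsto_pow_exp_atTop (q : ℕ) :
    Tendsto (fun x : ℝ => x ^ q * Real.exp (-x ^ 2 / 2)) atTop (nhds 0) := by
  have h := rpow_mul_exp_neg_mul_sq_isLittleO_exp_neg (b := (1:ℝ)/2) (by norm_num) (q : ℝ)
  have h2 : (fun x : ℝ => x ^ q * Real.exp (-x ^ 2 / 2)) =o[atTop]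
      fun x : ℝ => Real.exp (-(1/2) * x) := by
    refine h.congr' ?_ (Eventually.of_forall fun x => rfl)
    filter_upwards with x
    rw [Real.rpow_natCast]; ring_nf
  refine h2.isBigO.trans_tendsto ?_
  have : Tendsto (fun x : ℝ => -(1/2) * x) atTop atBot :=
    Tendsto.const_mul_atTop_of_neg (by norm_num) tendsto_id
  exact Real.tendsto_exp_atBot.comp this

lemma tendsto_pow_exp_atBot (q : ℕ) :
    Tendsto (fun x : ℝ => x ^ q * Real.exp (-x ^ 2 / 2)) atBot (nhds 0) := by
  have h1 : Tendsto (fun x : ℝ => ((-1 : ℝ)) ^ q * (x ^ q * Real.exp (-x ^ 2 / 2))) atTop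
      (nhds 0) := by
    simpa using (tendsto_pow_exp_atTop q).const_mul (((-1 : ℝ)) ^ q)
  have h2 : Tendsto (fun x : ℝ => (-x) ^ q * Real.exp (-x ^ 2 / 2)) atTop (nhds 0) := by
    refine h1.congr (fun x => ?_)
    rw [neg_pow]; ring_nf
  have := h2.comp tendsto_neg_atBot_atTop
  simpa [Function.comp_def, neg_neg] using this

lemma integral_deriv_eq_zero (g g' : ℝ → ℝ) (hd : ∀ x, HasDerivAt g (g' x) x)
    (hi : Integrable g') (ht : Tendsto g atTop (nhds 0)) (hb : Tendsto g atBot (nhds 0)) :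
    ∫ x, g' x = 0 := by
  have h1 : ∫ x in Set.Iic (0:ℝ), g' x = g 0 - 0 :=
    integral_Iic_of_hasDerivAt_of_tendsto (hd 0).continuousAt.continuousWithinAt
      (fun x _ => hd x) hi.integrableOn hb
  have h2 : ∫ x in Set.Ioi (0:ℝ), g' x = 0 - g 0 :=
    integral_Ioi_of_hasDerivAt_of_tendsto (hd 0).continuousAt.continuousWithinAt
      (fun x _ => hd x) hi.integrableOn ht
  have h3 := intervalIntegral.integral_Iic_add_Ioi (μ := volume) (b := (0:ℝ))
    hi.integrableOn hi.integrableOn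
  rw [← h3, h1, h2]; ring

lemma hasDerivAt_exp_part (x : ℝ) :
    HasDerivAt (fun x : ℝ => Real.exp (-x ^ 2 / 2)) (-x * Real.exp (-x ^ 2 / 2)) x := by
  have h1 : HasDerivAt (fun x : ℝ => -x ^ 2 / 2) (-x) x := by
    have := ((hasDerivAt_pow 2 x).neg).div_const 2
    simpa using this.congr_deriv (by push_cast; ring)
  simpa [mul_comm, Function.comp_def] using (Real.hasDerivAt_exp (-x ^ 2 / 2)).comp x h1

lemma J1 : J 1 = 0 := by
  have hd : ∀ x : ℝ, HasDerivAt (fun x : ℝ => -Real.exp (-x ^ 2 / 2))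
      (x ^ 1 * Real.exp (-x ^ 2 / 2)) x := by
    intro x
    have := (hasDerivAt_exp_part x).neg
    refine this.congr_deriv ?_
    ring
  have := integral_deriv_eq_zero _ _ hd (Jint 1)
    (by simpa using (tendsto_pow_exp_atTop 0).neg)
    (by simpa using (tendsto_pow_exp_atBot 0).neg)
  simpa [J] using this

lemma Jrec (p : ℕ) : J (p + 2) = (p + 1) * J p := by
  have hd : ∀ x : ℝ, HasDerivAt (fun x : ℝ => -(x ^ (p+1) * Real.exp (-x ^ 2 / 2)))
      (x ^ (p+2) * Real.exp (-x ^ 2 / 2) - (p+1) * (x ^ p * Real.exp (-x ^ 2 / 2))) x := by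
    intro x
    have h1 := ((hasDerivAt_pow (p+1) x).mul (hasDerivAt_exp_part x)).neg
    refine h1.congr_deriv ?_
    push_cast
    ring_nf
  have hi : Integrable (fun x : ℝ => x ^ (p+2) * Real.exp (-x ^ 2 / 2)
      - (p+1) * (x ^ p * Real.exp (-x ^ 2 / 2))) := (Jint (p+2)).sub ((Jint p).const_mul _)
  have ht : Tendsto (fun x : ℝ => -(x ^ (p+1) * Real.exp (-x ^ 2 / 2))) atTop (nhds 0) := by
    simpa using (tendsto_pow_exp_atTop (p+1)).neg
  have hb : Tendsto (fun x : ℝ => -(x ^ (p+1) * Real.exp (-x ^ 2 / 2))) atBot (nhds 0) := by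
    simpa using (tendsto_pow_exp_atBot (p+1)).neg
  have h0 := integral_deriv_eq_zero _ _ hd hi ht hb
  rw [integral_sub (Jint (p+2)) ((Jint p).const_mul _), integral_const_mul] at h0
  have : J (p+2) - (p+1) * J p = 0 := by simpa [J] using h0
  linarith

lemma J2 : J 2 = Real.sqrt (2 * Real.pi) := by simpa [J0] using Jrec 0
lemma J3 : J 3 = 0 := by simpa [J1] using Jrec 1
lemma J4 : J 4 = 3 * Real.sqrt (2 * Real.pi) := by
  have h := Jrec 2
  rw [J2, show 2 + 2 = 4 from rfl] at h
  rw [h]; push_cast; ring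

noncomputable def gm (p : ℕ) : ℝ := ∫ x, x ^ p ∂(gaussianReal 0 1)

lemma gaussianPDFReal_std (x : ℝ) :
    gaussianPDFReal 0 1 x = (Real.sqrt (2 * Real.pi))⁻¹ * Real.exp (-x ^ 2 / 2) := by
  simp [gaussianPDFReal]

lemma sqrt2pi_pos : 0 < Real.sqrt (2 * Real.pi) :=
  Real.sqrt_pos.2 (by positivity)

lemma gm_eq (p : ℕ) : gm p = (Real.sqrt (2 * Real.pi))⁻¹ * J p := by
  rw [gm, gaussianReal_of_var_ne_zero 0 one_ne_zero]
  have hmeas : Measurable fun x => (gaussianPDFReal 0 1 x).toNNReal :=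
    (measurable_gaussianPDFReal 0 1).real_toNNReal
  have hpdf : gaussianPDF 0 1 = fun x => ((gaussianPDFReal 0 1 x).toNNReal : ℝ≥0∞) := rfl
  rw [hpdf, integral_withDensity_eq_integral_smul hmeas]
  have : ∀ x : ℝ, (gaussianPDFReal 0 1 x).toNNReal • (x ^ p)
      = (Real.sqrt (2 * Real.pi))⁻¹ * (x ^ p * Real.exp (-x ^ 2 / 2)) := by
    intro x
    rw [NNReal.smul_def, Real.coe_toNNReal _ (gaussianPDFReal_nonneg 0 1 x),
      gaussianPDFReal_std, smul_eq_mul]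
    ring
  rw [funext this, integral_const_mul]
  rfl

lemma gm0 : gm 0 = 1 := by
  rw [gm_eq, J0]; field_simp
lemma gm1 : gm 1 = 0 := by rw [gm_eq, J1]; ring
lemma gm2 : gm 2 = 1 := by rw [gm_eq, J2]; field_simp
lemma gm3 : gm 3 = 0 := by rw [gm_eq, J3]; ring
lemma gm4 : gm 4 = 3 := by
  rw [gm_eq, J4]
  rw [mul_comm (3:ℝ)]
  rw [← mul_assoc]
  field_simp

lemma integrable_pow_gaussian (p : ℕ) :
    Integrable (fun x : ℝ => x ^ p) (gaussianReal 0 1) := by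
  rw [gaussianReal_of_var_ne_zero 0 one_ne_zero]
  have hmeas : Measurable (gaussianPDF 0 1) := measurable_gaussianPDF 0 1
  rw [integrable_withDensity_iff hmeas (Eventually.of_forall fun x => ENNReal.ofReal_lt_top)]
  have : ∀ x : ℝ, x ^ p * (gaussianPDF 0 1 x).toReal
      = (Real.sqrt (2 * Real.pi))⁻¹ * (x ^ p * Real.exp (-x ^ 2 / 2)) := by
    intro x
    rw [gaussianPDF, ENNReal.toReal_ofReal (gaussianPDFReal_nonneg 0 1 x), gaussianPDFReal_std]
    ring
  rw [funext this]
  exact (Jint p).const_mul _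

lemma iIndepFun_precomp {Ω ι ι' : Type*} [MeasurableSpace Ω] {μ : Measure Ω} {β : Type*}
    [mβ : MeasurableSpace β] {f : ι → Ω → β} (h : iIndepFun f μ)
    {g : ι' → ι} (hg : Function.Injective g) :
    iIndepFun (fun i => f (g i)) μ := by
  classical
  rw [iIndepFun_iff_measure_inter_preimage_eq_mul] at h ⊢
  intro S sets hsets
  set sets' : ι → Set β := fun j => if hj : ∃ i ∈ S, g i = j then sets hj.choose else Set.univ
    with hsets'
  have hkey : ∀ i ∈ S, sets' (g i) = sets i := by
    intro i hi
    have hj : ∃ i' ∈ S, g i' = g i := ⟨i, hi, rfl⟩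
    simp only [hsets', dif_pos hj]
    rw [hg hj.choose_spec.2]
  have h1 := h (S.image g) (sets := sets') (fun j hj => by
    obtain ⟨i, hi, rfl⟩ := Finset.mem_image.mp hj
    rw [hkey i hi]; exact hsets i hi)
  rw [Finset.set_biInter_finset_image, Finset.prod_image
    (fun a _ b _ hab => hg hab)] at h1
  calc μ (⋂ i ∈ S, (fun i => f (g i)) i ⁻¹' sets i)
      = μ (⋂ i ∈ S, f (g i) ⁻¹' sets' (g i)) := by
        congr 1; apply Set.iInter₂_congr; intro i hi; rw [hkey i hi]
    _ = ∏ i ∈ S, μ (f (g i) ⁻¹' sets' (g i)) := h1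
    _ = ∏ i ∈ S, μ ((fun i => f (g i)) i ⁻¹' sets i) := by
        apply Finset.prod_congr rfl; intro i hi; rw [hkey i hi]

lemma indep_prod_int {Ω : Type*} [MeasureSpace Ω] [IsProbabilityMeasure (ℙ : Measure Ω)]
    {ι : Type*} {Y : ι → Ω → ℝ} (hY : iIndepFun Y ℙ)
    (hm : ∀ k, Measurable (Y k)) (hInt : ∀ k, Integrable (Y k) ℙ) (s : Finset ι) :
    Integrable (fun ω => ∏ k ∈ s, Y k ω) ℙ ∧
      ∫ ω, ∏ k ∈ s, Y k ω ∂ℙ = ∏ k ∈ s, ∫ ω, Y k ω ∂ℙ := by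
  classical
  induction s using Finset.induction with
  | empty => simp
  | @insert a s ha ih =>
    have hip : IndepFun (∏ j ∈ s, Y j) (Y a) ℙ :=
      hY.indepFun_finsetProd_of_notMem hm ha
    have hps : Integrable (∏ j ∈ s, Y j) ℙ := by
      refine ih.1.congr (Eventually.of_forall fun ω => ?_)
      rw [Finset.prod_apply]
    have hconv : (fun ω => ∏ k ∈ insert a s, Y k ω)
        = fun ω => (∏ j ∈ s, Y j) ω * Y a ω := by
      funext ω; rw [Finset.prod_insert ha, Finset.prod_apply]; ring
    constructor
    · rw [hconv]; exact hip.integrable_mul hps (hInt a)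
    · rw [hconv]
      have := hip.integral_mul_eq_mul_integral hps.aestronglyMeasurable (hInt a).aestronglyMeasurable
      rw [show (fun ω => (∏ j ∈ s, Y j) ω * Y a ω) = (∏ j ∈ s, Y j) * Y a from rfl, this,
        Finset.prod_insert ha]
      rw [show ∫ ω, (∏ j ∈ s, Y j) ω ∂ℙ = ∫ ω, ∏ j ∈ s, Y j ω ∂ℙ from by
        congr 1; funext ω; rw [Finset.prod_apply]]
      rw [ih.2]; ring

lemma moment_std {Ω : Type*} [MeasureSpace Ω] {Z : Ω → ℝ} (hm : Measurable Z)
    (hg : Measure.map Z ℙ = gaussianReal 0 1) (j : ℕ) :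
    Integrable (fun ω => Z ω ^ j) ℙ ∧ ∫ ω, Z ω ^ j ∂ℙ = ∫ x, x ^ j ∂(gaussianReal 0 1) := by
  have hae : AEMeasurable Z ℙ := hm.aemeasurable
  have hsm : AEStronglyMeasurable (fun x : ℝ => x ^ j) (Measure.map Z ℙ) :=
    (measurable_id.pow_const j).aestronglyMeasurable
  constructor
  · have h1 : Integrable (fun x : ℝ => x ^ j) (Measure.map Z ℙ) := by
      rw [hg]; exact integrable_pow_gaussian j
    exact (integrable_map_measure hsm hae).mp h1
  · rw [← integral_map hae hsm, hg]

section Mlemmas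

variable {N : ℕ}

def sg (k : Fin N) (a : ℕ) : Fin N → ℕ := Pi.single k a

lemma sg_apply (k : Fin N) (a : ℕ) (j : Fin N) : sg k a j = if j = k then a else 0 :=
  Pi.single_apply k a j

noncomputable def Mm (e : Fin N → ℕ) : ℝ := ∏ k, gm (e k)

lemma Mm_single (k : Fin N) (a : ℕ) : Mm (sg k a) = gm a := by
  rw [Mm, Finset.prod_eq_single_of_mem k (Finset.mem_univ k)
    (fun j _ hj => by rw [sg_apply, if_neg hj, gm0])]
  rw [sg_apply, if_pos rfl]

lemma Mm_pair {k l : Fin N} (h : k ≠ l) (a b : ℕ) :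
    Mm (sg k a + sg l b) = gm a * gm b := by
  rw [Mm, ← Finset.mul_prod_erase _ _ (Finset.mem_univ k)]
  have hl : l ∈ Finset.univ.erase k := Finset.mem_erase.2 ⟨Ne.symm h, Finset.mem_univ l⟩
  rw [← Finset.mul_prod_erase _ _ hl]
  have h1 : (sg k a + sg l b) k = a := by simp [sg_apply, h]
  have h2 : (sg k a + sg l b) l = b := by simp [sg_apply, Ne.symm h]
  rw [h1, h2, Finset.prod_eq_one, mul_one]
  · intro j hj
    have hjl : j ≠ l := (Finset.mem_erase.1 hj).1
    have hjk : j ≠ k := (Finset.mem_erase.1 (Finset.mem_erase.1 hj).2).1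
    simp [sg_apply, hjk, hjl, gm0]

lemma Mm_zero1 (e : Fin N → ℕ) (j : Fin N) (h : e j = 1) : Mm e = 0 :=
  Finset.prod_eq_zero (Finset.mem_univ j) (by rw [h, gm1])

lemma Mm_zero3 (e : Fin N → ℕ) (j : Fin N) (h : e j = 3) : Mm e = 0 :=
  Finset.prod_eq_zero (Finset.mem_univ j) (by rw [h, gm3])

lemma L1 (p q : Fin N) :
    Mm (sg p 1 + sg q 1) = if q = p then (1:ℝ) else 0 := by
  by_cases h : q = p
  · have he : sg p 1 + sg q 1 = sg p 2 := by
      funext j; by_cases hj : j = p <;> simp [sg_apply, h, hj]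
    rw [he, Mm_single, gm2, if_pos h]
  · rw [Mm_pair (fun hh => h hh.symm), gm1, if_neg h, zero_mul]

lemma L2 (k l : Fin N) :
    Mm (sg k 2 + sg l 2) = if l = k then (3:ℝ) else 1 := by
  by_cases h : l = k
  · have he : sg k 2 + sg l 2 = sg k 4 := by
      funext j; by_cases hj : j = k <;> simp [sg_apply, h, hj]
    rw [he, Mm_single, gm4, if_pos h]
  · rw [Mm_pair (fun hh => h hh.symm), gm2, if_neg h, one_mul]

lemma L3 (k p q : Fin N) :
    Mm (sg k 2 + sg p 1 + sg q 1)
      = if q = p then (if p = k then (3:ℝ) else 1) else 0 := by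
  by_cases hq : q = p
  · have he : sg k 2 + sg p 1 + sg q 1 = sg k 2 + sg p 2 := by
      funext j; simp only [Pi.add_apply, sg_apply, hq]; split_ifs <;> omega
    by_cases hp : p = k
    · have he2 : sg k 2 + sg p 2 = sg k 4 := by
        funext j; by_cases hj : j = k <;> simp [sg_apply, hp, hj]
      rw [he, he2, Mm_single, gm4, if_pos hq, if_pos hp]
    · rw [he, Mm_pair (fun hh => hp hh.symm), gm2, one_mul, if_pos hq, if_neg hp]
  · rw [if_neg hq]
    by_cases h1 : p = k
    · refine Mm_zero3 _ p ?_
      rw [Pi.add_apply, Pi.add_apply, sg_apply, sg_apply, sg_apply, if_pos h1, if_pos rfl,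
        if_neg (Ne.symm hq)]
    · by_cases h2 : q = k
      · refine Mm_zero3 _ q ?_
        rw [Pi.add_apply, Pi.add_apply, sg_apply, sg_apply, sg_apply, if_pos h2, if_neg hq,
          if_pos rfl]
      · refine Mm_zero1 _ p ?_
        rw [Pi.add_apply, Pi.add_apply, sg_apply, sg_apply, sg_apply, if_neg h1, if_pos rfl,
          if_neg (Ne.symm hq)]

lemma L4 {p q : Fin N} (hpq : q ≠ p) (r s : Fin N) :
    Mm (sg p 1 + sg q 1 + sg r 1 + sg s 1)
      = (if r = p then (1:ℝ) else 0) * (if s = q then 1 else 0)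
        + (if r = q then (1:ℝ) else 0) * (if s = p then 1 else 0) := by
  by_cases hrp : r = p
  · by_cases hsq : s = q
    · have he : sg p 1 + sg q 1 + sg r 1 + sg s 1 = sg p 2 + sg q 2 := by
        funext j; simp only [Pi.add_apply, sg_apply, hrp, hsq]; split_ifs <;> omega
      rw [he, Mm_pair (Ne.symm hpq), gm2, one_mul]
      have hrq : ¬ r = q := fun hh => hpq (hh ▸ hrp)
      rw [if_pos hrp, if_pos hsq, if_neg hrq, zero_mul, add_zero, mul_one]
    · by_cases hsp : s = p
      · rw [Mm_zero3 _ p (by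
          rw [Pi.add_apply, Pi.add_apply, Pi.add_apply, sg_apply, sg_apply, sg_apply, sg_apply,
            if_pos rfl, if_neg (Ne.symm hpq), if_pos (Eq.symm hrp), if_pos (Eq.symm hsp)])]
        rw [if_pos hrp, if_neg hsq, mul_zero, zero_add]
        have hrq : ¬ r = q := fun hh => hpq (hh ▸ hrp)
        rw [if_neg hrq, zero_mul]
      · rw [Mm_zero1 _ s (by
          rw [Pi.add_apply, Pi.add_apply, Pi.add_apply, sg_apply, sg_apply, sg_apply, sg_apply,
            if_neg hsp, if_neg hsq, if_neg (fun hh => hsp (hh.trans hrp)), if_pos rfl])]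
        rw [if_neg hsq, mul_zero, if_neg hsp, mul_zero, add_zero]
  · by_cases hrq : r = q
    · by_cases hsp : s = p
      · have he : sg p 1 + sg q 1 + sg r 1 + sg s 1 = sg p 2 + sg q 2 := by
          funext j; simp only [Pi.add_apply, sg_apply, hrq, hsp]; split_ifs <;> omega
        rw [he, Mm_pair (Ne.symm hpq), gm2, one_mul]
        rw [if_neg hrp, if_pos hrq, if_pos hsp, zero_mul, zero_add, mul_one]
      · by_cases hsq : s = q
        · rw [Mm_zero3 _ q (by
            rw [Pi.add_apply, Pi.add_apply, Pi.add_apply, sg_apply, sg_apply, sg_apply, sg_apply,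
              if_neg hpq, if_pos rfl, if_pos (Eq.symm hrq), if_pos (Eq.symm hsq)])]
          rw [if_neg hrp, zero_mul, if_neg hsp, mul_zero, add_zero]
        · rw [Mm_zero1 _ s (by
            rw [Pi.add_apply, Pi.add_apply, Pi.add_apply, sg_apply, sg_apply, sg_apply, sg_apply,
              if_neg hsp, if_neg hsq, if_neg (fun hh => hsq (hh.trans hrq)), if_pos rfl])]
          rw [if_neg hrp, zero_mul, if_neg hsp, mul_zero, add_zero]
    · rw [if_neg hrp, if_neg hrq, zero_mul, zero_mul, add_zero]
      by_cases hsr : s = r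
      · refine Mm_zero1 _ p ?_
        rw [Pi.add_apply, Pi.add_apply, Pi.add_apply, sg_apply, sg_apply, sg_apply, sg_apply,
          if_pos rfl, if_neg (Ne.symm hpq), if_neg (fun hh => hrp hh.symm),
          if_neg (fun hh => hrp (hh.trans hsr).symm)]
      · refine Mm_zero1 _ r ?_
        rw [Pi.add_apply, Pi.add_apply, Pi.add_apply, sg_apply, sg_apply, sg_apply, sg_apply,
          if_neg hrp, if_neg hrq, if_pos rfl, if_neg (fun hh => hsr hh.symm)]

end Mlemmas

lemma sum_mul_sum3 {ι : Type*} (s : Finset ι) (f g h : ι → ℝ) :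
    (∑ i ∈ s, f i) * (∑ i ∈ s, g i) * (∑ i ∈ s, h i)
      = ∑ i ∈ s, ∑ j ∈ s, ∑ k ∈ s, f i * g j * h k := by
  rw [Finset.sum_mul_sum, Finset.sum_mul]
  exact Finset.sum_congr rfl fun i _ => by rw [Finset.sum_mul_sum]

lemma sum_mul_sum4 {ι : Type*} (s : Finset ι) (f g h e : ι → ℝ) :
    (∑ i ∈ s, f i) * (∑ i ∈ s, g i) * (∑ i ∈ s, h i) * (∑ i ∈ s, e i)
      = ∑ i ∈ s, ∑ j ∈ s, ∑ k ∈ s, ∑ l ∈ s, f i * g j * h k * e l := by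
  rw [sum_mul_sum3, Finset.sum_mul]
  refine Finset.sum_congr rfl fun i _ => ?_
  rw [Finset.sum_mul]
  refine Finset.sum_congr rfl fun j _ => ?_
  rw [Finset.sum_mul]
  refine Finset.sum_congr rfl fun k _ => ?_
  rw [Finset.mul_sum]

lemma key_lemma {Ω : Type*} [MeasureSpace Ω] [IsProbabilityMeasure (ℙ : Measure Ω)]
    {N : ℕ} (hN : 2 ≤ N) (Y : Fin N → Ω → ℝ) (hm : ∀ k, Measurable (Y k))
    (hY : iIndepFun Y ℙ)
    (hg : ∀ k, Measure.map (Y k) ℙ = gaussianReal 0 1) :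
    Integrable (fun ω =>
        ((1/((N:ℝ)-1)) * ∑ k, (Y k ω - (1/(N:ℝ)) * ∑ l, Y l ω)^2 - 1)^2) ℙ ∧
      ∫ ω, ((1/((N:ℝ)-1)) * ∑ k, (Y k ω - (1/(N:ℝ)) * ∑ l, Y l ω)^2 - 1)^2 ∂ℙ
        = 2/((N:ℝ)-1) := by
  have hN2 : (2:ℝ) ≤ (N:ℝ) := by exact_mod_cast hN
  have hN0 : (N:ℝ) ≠ 0 := by linarith
  have hN1 : (N:ℝ) - 1 ≠ 0 := by intro h; linarith
  set P : (Fin N → ℕ) → Ω → ℝ := fun e ω => ∏ k, Y k ω ^ e k with hPdef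
  have hPfacts : ∀ e, Integrable (P e) ℙ ∧ ∫ ω, P e ω ∂ℙ = Mm e := by
    intro e
    have hYe : iIndepFun (fun k ω => Y k ω ^ e k) ℙ :=
      hY.comp (fun k (x:ℝ) => x ^ e k) (fun k => measurable_id.pow_const (e k))
    have hints : ∀ k, Integrable (fun ω => Y k ω ^ e k) ℙ :=
      fun k => (moment_std (hm k) (hg k) (e k)).1
    have h := indep_prod_int hYe (fun k => (hm k).pow_const (e k)) hints Finset.univ
    refine ⟨h.1, ?_⟩
    rw [hPdef]
    simp only []
    rw [h.2, Mm]
    exact Finset.prod_congr rfl (fun k _ => (moment_std (hm k) (hg k) (e k)).2)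
  have hPint : ∀ e, Integrable (P e) ℙ := fun e => (hPfacts e).1
  have hPval : ∀ e, ∫ ω, P e ω ∂ℙ = Mm e := fun e => (hPfacts e).2
  have P_single : ∀ (k : Fin N) (a : ℕ) (ω : Ω), P (sg k a) ω = Y k ω ^ a := by
    intro k a ω
    rw [hPdef]
    simp only []
    rw [Finset.prod_eq_single_of_mem k (Finset.mem_univ k)
      (fun j _ hj => by rw [sg_apply, if_neg hj, pow_zero]), sg_apply, if_pos rfl]
  have P_add : ∀ e f (ω : Ω), P (e + f) ω = P e ω * P f ω := by
    intro e f ω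
    rw [hPdef]
    simp only []
    rw [← Finset.prod_mul_distrib]
    exact Finset.prod_congr rfl (fun k _ => by rw [Pi.add_apply, pow_add])
  set F1 : Ω → ℝ := fun ω => ∑ k, ∑ l, P (sg k 2 + sg l 2) ω with hF1def
  set F2 : Ω → ℝ := fun ω => ∑ k, ∑ p, ∑ q, P (sg k 2 + sg p 1 + sg q 1) ω with hF2def
  set F3 : Ω → ℝ := fun ω => ∑ p, ∑ q, ∑ r, ∑ s,
    P (sg p 1 + sg q 1 + sg r 1 + sg s 1) ω with hF3def
  set F4 : Ω → ℝ := fun ω => ∑ k, P (sg k 2) ω with hF4def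
  set F5 : Ω → ℝ := fun ω => ∑ p, ∑ q, P (sg p 1 + sg q 1) ω with hF5def
  set c1 : ℝ := (1/((N:ℝ)-1))^2 with hc1
  set c2 : ℝ := 2*(1/((N:ℝ)-1))^2/(N:ℝ) with hc2
  set c3 : ℝ := (1/((N:ℝ)-1))^2/(N:ℝ)^2 with hc3
  set c4 : ℝ := 2*(1/((N:ℝ)-1)) with hc4
  set c5 : ℝ := 2*(1/((N:ℝ)-1))/(N:ℝ) with hc5
  -- pointwise identity
  have hpt : ∀ ω, ((1/((N:ℝ)-1)) * ∑ k, (Y k ω - (1/(N:ℝ)) * ∑ l, Y l ω)^2 - 1)^2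
      = ((((c1 * F1 ω - c2 * F2 ω) + c3 * F3 ω) - c4 * F4 ω) + c5 * F5 ω) + 1 := by
    intro ω
    have h4 : F4 ω = ∑ k, Y k ω ^ 2 := by
      rw [hF4def]
      exact Finset.sum_congr rfl fun k _ => P_single k 2 ω
    have h5 : F5 ω = (∑ l, Y l ω) * (∑ l, Y l ω) := by
      rw [hF5def, Finset.sum_mul_sum]
      refine Finset.sum_congr rfl fun p _ => Finset.sum_congr rfl fun q _ => ?_
      rw [P_add, P_single, P_single, pow_one, pow_one]
    have h1 : F1 ω = (∑ k, Y k ω ^ 2) * (∑ k, Y k ω ^ 2) := by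
      rw [hF1def, Finset.sum_mul_sum]
      refine Finset.sum_congr rfl fun k _ => Finset.sum_congr rfl fun l _ => ?_
      rw [P_add, P_single, P_single]
    have h2 : F2 ω = (∑ k, Y k ω ^ 2) * (∑ l, Y l ω) * (∑ l, Y l ω) := by
      rw [hF2def, sum_mul_sum3]
      refine Finset.sum_congr rfl fun k _ => Finset.sum_congr rfl fun p _ =>
        Finset.sum_congr rfl fun q _ => ?_
      rw [P_add, P_add, P_single, P_single, P_single, pow_one, pow_one]
    have h3 : F3 ω = (∑ l, Y l ω) * (∑ l, Y l ω) * (∑ l, Y l ω) * (∑ l, Y l ω) := by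
      rw [hF3def, sum_mul_sum4]
      refine Finset.sum_congr rfl fun p _ => Finset.sum_congr rfl fun q _ =>
        Finset.sum_congr rfl fun r _ => Finset.sum_congr rfl fun t _ => ?_
      rw [P_add, P_add, P_add, P_single, P_single, P_single, P_single,
        pow_one, pow_one, pow_one, pow_one]
    have hsum : ∑ k, (Y k ω - (1/(N:ℝ)) * ∑ l, Y l ω)^2
        = (∑ k, Y k ω ^ 2) - ((∑ l, Y l ω) * (∑ l, Y l ω))/(N:ℝ) := by
      have e1 : ∀ k ∈ Finset.univ, (Y k ω - (1/(N:ℝ)) * ∑ l, Y l ω)^2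
          = Y k ω ^ 2 - ((2/(N:ℝ)) * (∑ l, Y l ω)) * Y k ω
            + (1/(N:ℝ)^2) * ((∑ l, Y l ω) * (∑ l, Y l ω)) := fun k _ => by ring
      rw [Finset.sum_congr rfl e1, Finset.sum_add_distrib, Finset.sum_sub_distrib,
        ← Finset.mul_sum, Finset.sum_const, Finset.card_univ, Fintype.card_fin,
        nsmul_eq_mul]
      field_simp
      ring
    rw [hsum, h1, h2, h3, h4, h5, hc1, hc2, hc3, hc4, hc5]
    ring
  have hfun : (fun ω => ((1/((N:ℝ)-1)) * ∑ k, (Y k ω - (1/(N:ℝ)) * ∑ l, Y l ω)^2 - 1)^2)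
      = fun ω => ((((c1 * F1 ω - c2 * F2 ω) + c3 * F3 ω) - c4 * F4 ω) + c5 * F5 ω) + 1 :=
    funext hpt
  have hIF1 : Integrable F1 ℙ :=
    integrable_finset_sum _ (fun k _ => integrable_finset_sum _ (fun l _ => hPint _))
  have hIF2 : Integrable F2 ℙ :=
    integrable_finset_sum _ (fun k _ => integrable_finset_sum _
      (fun p _ => integrable_finset_sum _ (fun q _ => hPint _)))
  have hIF3 : Integrable F3 ℙ :=
    integrable_finset_sum _ (fun p _ => integrable_finset_sum _
      (fun q _ => integrable_finset_sum _ (fun r _ => integrable_finset_sum _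
        (fun t _ => hPint _))))
  have hIF4 : Integrable F4 ℙ := integrable_finset_sum _ (fun k _ => hPint _)
  have hIF5 : Integrable F5 ℙ :=
    integrable_finset_sum _ (fun p _ => integrable_finset_sum _ (fun q _ => hPint _))
  have g1int : Integrable (fun ω => c1 * F1 ω) ℙ := hIF1.const_mul c1
  have g2int : Integrable (fun ω => c2 * F2 ω) ℙ := hIF2.const_mul c2
  have g3int : Integrable (fun ω => c3 * F3 ω) ℙ := hIF3.const_mul c3
  have g4int : Integrable (fun ω => c4 * F4 ω) ℙ := hIF4.const_mul c4
  have g5int : Integrable (fun ω => c5 * F5 ω) ℙ := hIF5.const_mul c5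
  have h12 : Integrable (fun ω => c1 * F1 ω - c2 * F2 ω) ℙ := g1int.sub g2int
  have h123 : Integrable (fun ω => (c1 * F1 ω - c2 * F2 ω) + c3 * F3 ω) ℙ := h12.add g3int
  have h1234 : Integrable (fun ω => ((c1 * F1 ω - c2 * F2 ω) + c3 * F3 ω) - c4 * F4 ω) ℙ :=
    h123.sub g4int
  have h12345 : Integrable
      (fun ω => (((c1 * F1 ω - c2 * F2 ω) + c3 * F3 ω) - c4 * F4 ω) + c5 * F5 ω) ℙ :=
    h1234.add g5int
  have hbigint : Integrable (fun ω =>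
      ((((c1 * F1 ω - c2 * F2 ω) + c3 * F3 ω) - c4 * F4 ω) + c5 * F5 ω) + 1) ℙ :=
    h12345.add (integrable_const 1)
  constructor
  · rw [hfun]; exact hbigint
  -- now the integral computation
  rw [hfun]
  rw [integral_add h12345 (integrable_const 1),
    integral_add h1234 g5int,
    integral_sub h123 g4int,
    integral_add h12 g3int,
    integral_sub g1int g2int,
    integral_const,
    integral_const_mul, integral_const_mul, integral_const_mul, integral_const_mul,
    integral_const_mul]
  have hEF1 : ∫ ω, F1 ω ∂ℙ = (N:ℝ)^2 + 2*(N:ℝ) := by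
    rw [hF1def, integral_finset_sum _ (fun k _ => integrable_finset_sum _ (fun l _ => hPint _))]
    have : ∀ k : Fin N, ∫ ω, ∑ l, P (sg k 2 + sg l 2) ω ∂ℙ = 2 + (N:ℝ) := by
      intro k
      rw [integral_finset_sum _ (fun l _ => hPint _)]
      have e2 : ∀ l : Fin N, ∫ ω, P (sg k 2 + sg l 2) ω ∂ℙ
          = (if l = k then (2:ℝ) else 0) + 1 := by
        intro l; rw [hPval, L2]; split_ifs <;> ring
      rw [Finset.sum_congr rfl fun l _ => e2 l, Finset.sum_add_distrib]
      simp [Finset.sum_ite_eq', Finset.card_univ]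
    rw [Finset.sum_congr rfl fun k _ => this k, Finset.sum_const, Finset.card_univ,
      Fintype.card_fin, nsmul_eq_mul]
    ring
  have hEF2 : ∫ ω, F2 ω ∂ℙ = (N:ℝ)^2 + 2*(N:ℝ) := by
    rw [hF2def, integral_finset_sum _ (fun k _ => integrable_finset_sum _
      (fun p _ => integrable_finset_sum _ (fun q _ => hPint _)))]
    have : ∀ k : Fin N, ∫ ω, ∑ p, ∑ q, P (sg k 2 + sg p 1 + sg q 1) ω ∂ℙ = 2 + (N:ℝ) := by
      intro k
      rw [integral_finset_sum _ (fun p _ => integrable_finset_sum _ (fun q _ => hPint _))]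
      have e2 : ∀ p : Fin N, ∫ ω, ∑ q, P (sg k 2 + sg p 1 + sg q 1) ω ∂ℙ
          = (if p = k then (2:ℝ) else 0) + 1 := by
        intro p
        rw [integral_finset_sum _ (fun q _ => hPint _),
          Finset.sum_congr rfl fun q _ => (hPval _).trans (L3 k p q)]
        simp only [Finset.sum_ite_eq', Finset.mem_univ, if_true]
        split_ifs <;> ring
      rw [Finset.sum_congr rfl fun p _ => e2 p, Finset.sum_add_distrib]
      simp [Finset.sum_ite_eq', Finset.card_univ]
    rw [Finset.sum_congr rfl fun k _ => this k, Finset.sum_const, Finset.card_univ,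
      Fintype.card_fin, nsmul_eq_mul]
    ring
  have hEF3 : ∫ ω, F3 ω ∂ℙ = 3*(N:ℝ)^2 := by
    rw [hF3def, integral_finset_sum _ (fun p _ => integrable_finset_sum _
      (fun q _ => integrable_finset_sum _ (fun r _ => integrable_finset_sum _
        (fun t _ => hPint _))))]
    have inner2 : ∀ p q : Fin N, ∑ r, ∑ t, Mm (sg p 1 + sg q 1 + sg r 1 + sg t 1)
        = if q = p then ((N:ℝ) + 2) else 2 := by
      intro p q
      by_cases hq : q = p
      · rw [if_pos hq]
        have he : ∀ r t : Fin N, (sg p 1 + sg q 1 + sg r 1 + sg t 1 : Fin N → ℕ)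
            = sg p 2 + sg r 1 + sg t 1 := by
          intro r t; funext j
          simp only [Pi.add_apply, sg_apply, hq]; split_ifs <;> omega
        have e3 : ∀ r : Fin N, ∑ t, Mm (sg p 1 + sg q 1 + sg r 1 + sg t 1)
            = (if r = p then (2:ℝ) else 0) + 1 := by
          intro r
          rw [Finset.sum_congr rfl fun t _ => by rw [he r t, L3]]
          simp only [Finset.sum_ite_eq', Finset.mem_univ, if_true]
          split_ifs <;> ring
        rw [Finset.sum_congr rfl fun r _ => e3 r, Finset.sum_add_distrib]
        simp [Finset.sum_ite_eq', Finset.card_univ]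
        ring
      · rw [if_neg hq]
        have e3 : ∀ r : Fin N, ∑ t, Mm (sg p 1 + sg q 1 + sg r 1 + sg t 1)
            = (if r = p then (1:ℝ) else 0) + (if r = q then (1:ℝ) else 0) := by
          intro r
          rw [Finset.sum_congr rfl fun t _ => L4 hq r t, Finset.sum_add_distrib,
            ← Finset.mul_sum, ← Finset.mul_sum]
          simp [Finset.sum_ite_eq']
        rw [Finset.sum_congr rfl fun r _ => e3 r, Finset.sum_add_distrib]
        simp [Finset.sum_ite_eq']
        norm_num
    have : ∀ p : Fin N, ∫ ω, ∑ q, ∑ r, ∑ t,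
        P (sg p 1 + sg q 1 + sg r 1 + sg t 1) ω ∂ℙ = 3*(N:ℝ) := by
      intro p
      rw [integral_finset_sum _ (fun q _ => integrable_finset_sum _
        (fun r _ => integrable_finset_sum _ (fun t _ => hPint _)))]
      have e4 : ∀ q : Fin N, ∫ ω, ∑ r, ∑ t, P (sg p 1 + sg q 1 + sg r 1 + sg t 1) ω ∂ℙ
          = if q = p then ((N:ℝ) + 2) else 2 := by
        intro q
        rw [integral_finset_sum _ (fun r _ => integrable_finset_sum _ (fun t _ => hPint _))]
        rw [Finset.sum_congr rfl fun r _ => integral_finset_sum _ (fun t _ => hPint _)]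
        rw [Finset.sum_congr rfl fun r _ => Finset.sum_congr rfl fun t _ => hPval _]
        exact inner2 p q
      have e5 : ∀ q : Fin N, (if q = p then ((N:ℝ) + 2) else 2)
          = (if q = p then ((N:ℝ)) else 0) + 2 := by
        intro q; split_ifs <;> ring
      rw [Finset.sum_congr rfl fun q _ => (e4 q).trans (e5 q), Finset.sum_add_distrib]
      simp [Finset.sum_ite_eq', Finset.card_univ]
      ring
    rw [Finset.sum_congr rfl fun p _ => this p, Finset.sum_const, Finset.card_univ,
      Fintype.card_fin, nsmul_eq_mul]
    ring
  have hEF4 : ∫ ω, F4 ω ∂ℙ = (N:ℝ) := by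
    rw [hF4def, integral_finset_sum _ (fun k _ => hPint _)]
    rw [Finset.sum_congr rfl fun k _ => (hPval _).trans ((Mm_single k 2).trans gm2)]
    simp [Finset.card_univ]
  have hEF5 : ∫ ω, F5 ω ∂ℙ = (N:ℝ) := by
    rw [hF5def, integral_finset_sum _ (fun p _ => integrable_finset_sum _ (fun q _ => hPint _))]
    have : ∀ p : Fin N, ∫ ω, ∑ q, P (sg p 1 + sg q 1) ω ∂ℙ = 1 := by
      intro p
      rw [integral_finset_sum _ (fun q _ => hPint _),
        Finset.sum_congr rfl fun q _ => (hPval _).trans (L1 p q)]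
      simp [Finset.sum_ite_eq']
    rw [Finset.sum_congr rfl fun p _ => this p]
    simp [Finset.card_univ]
  rw [hEF1, hEF2, hEF3, hEF4, hEF5, hc1, hc2, hc3, hc4, hc5]
  simp only [measure_univ, ENNReal.toReal_one, probReal_univ, smul_eq_mul, mul_one]
  field_simp
  ring

end Aux


/-- expected squared Frobenius error of the spectral diagonal approximation. -/
theorem spectral_diagonal_expected_squared_error
    {Ω : Type*} [MeasureSpace Ω] [IsProbabilityMeasure (ℙ : Measure Ω)]
    (n N : ℕ) (hn : 1 ≤ n) (hN : 2 ≤ N)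
    (θ : Fin n × Fin N → Ω → ℝ)
    (hmeas : ∀ p, Measurable (θ p))
    (hindep : iIndepFun θ ℙ)
    (hgauss : ∀ p, Measure.map (θ p) ℙ = gaussianReal 0 1)
    (u : Fin n → Fin n → ℝ)
    (horth : ∀ i j, (∑ a, u i a * u j a) = if i = j then (1 : ℝ) else 0)
    (lam : Fin n → ℝ) (hlam : ∀ i, 0 ≤ lam i)
    (X : Fin N → Ω → Fin n → ℝ)
    (hX : ∀ k ω a, X k ω a = ∑ i, Real.sqrt (lam i) * θ (i, k) ω * u i a)
    (Xbar : Ω → Fin n → ℝ)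
    (hXbar : ∀ ω a, Xbar ω a = (1 / (N : ℝ)) * ∑ k, X k ω a)
    (c : Fin n → Ω → ℝ)
    (hc : ∀ i ω, c i ω = (1 / ((N : ℝ) - 1)) *
      ∑ k, ((∑ a, u i a * X k ω a) - (∑ a, u i a * Xbar ω a)) ^ 2)
    (DN : Ω → Matrix (Fin n) (Fin n) ℝ)
    (hDN : ∀ ω a b, DN ω a b = ∑ i, c i ω * u i a * u i b)
    (C : Matrix (Fin n) (Fin n) ℝ)
    (hC : ∀ a b, C a b = ∑ i, lam i * u i a * u i b) :
    ∫ ω, (∑ a, ∑ b, (C a b - DN ω a b) ^ 2) ∂ℙ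
      = (2 / ((N : ℝ) - 1)) * ∑ i, lam i ^ 2 := by
  have hkey : ∀ i : Fin n,
      Integrable (fun ω =>
        ((1/((N:ℝ)-1)) * ∑ k, (θ (i,k) ω - (1/(N:ℝ)) * ∑ l, θ (i,l) ω)^2 - 1)^2) ℙ ∧
      ∫ ω, ((1/((N:ℝ)-1)) * ∑ k, (θ (i,k) ω - (1/(N:ℝ)) * ∑ l, θ (i,l) ω)^2 - 1)^2 ∂ℙ
        = 2/((N:ℝ)-1) := by
    intro i
    exact key_lemma hN (fun k => θ (i, k)) (fun k => hmeas (i,k))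
      (iIndepFun_precomp hindep (fun a b hab => by simpa using hab))
      (fun k => hgauss (i,k))
  have hpt : ∀ ω, (∑ a, ∑ b, (C a b - DN ω a b) ^ 2)
      = ∑ i, lam i ^ 2 *
        ((1/((N:ℝ)-1)) * ∑ k, (θ (i,k) ω - (1/(N:ℝ)) * ∑ l, θ (i,l) ω)^2 - 1)^2 := by
    intro ω
    have hip : ∀ (i : Fin n) (k : Fin N),
        ∑ a, u i a * X k ω a = Real.sqrt (lam i) * θ (i,k) ω := by
      intro i k
      have e1 : ∀ a, u i a * X k ω a
          = ∑ j, Real.sqrt (lam j) * θ (j,k) ω * (u i a * u j a) := by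
        intro a; rw [hX k ω a, Finset.mul_sum]
        exact Finset.sum_congr rfl fun j _ => by ring
      rw [Finset.sum_congr rfl fun a _ => e1 a, Finset.sum_comm]
      have e2 : ∀ j, ∑ a, Real.sqrt (lam j) * θ (j,k) ω * (u i a * u j a)
          = Real.sqrt (lam j) * θ (j,k) ω * (if i = j then (1:ℝ) else 0) := by
        intro j; rw [← Finset.mul_sum, horth]
      rw [Finset.sum_congr rfl fun j _ => e2 j]
      simp only [mul_ite, mul_one, mul_zero]
      rw [Finset.sum_ite_eq]
      simp
    have hw : ∀ i : Fin n, ∑ a, u i a * Xbar ω a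
        = Real.sqrt (lam i) * ((1/(N:ℝ)) * ∑ l, θ (i,l) ω) := by
      intro i
      have e1 : ∀ a, u i a * Xbar ω a = ∑ k, (1/(N:ℝ)) * (u i a * X k ω a) := by
        intro a; rw [hXbar ω a, mul_left_comm, Finset.mul_sum, Finset.mul_sum]
      rw [Finset.sum_congr rfl fun a _ => e1 a, Finset.sum_comm,
        Finset.sum_congr rfl fun k _ => by rw [← Finset.mul_sum, hip i k],
        ← Finset.mul_sum, ← Finset.mul_sum]
      ring
    have hci : ∀ i, c i ω = lam i *
        ((1/((N:ℝ)-1)) * ∑ k, (θ (i,k) ω - (1/(N:ℝ)) * ∑ l, θ (i,l) ω)^2) := by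
      intro i
      rw [hc i ω]
      have e1 : ∀ k, ((∑ a, u i a * X k ω a) - (∑ a, u i a * Xbar ω a))^2
          = lam i * (θ (i,k) ω - (1/(N:ℝ)) * ∑ l, θ (i,l) ω)^2 := by
        intro k
        rw [hip i k, hw i]
        have e2 : Real.sqrt (lam i) * θ (i,k) ω
            - Real.sqrt (lam i) * ((1/(N:ℝ)) * ∑ l, θ (i,l) ω)
            = Real.sqrt (lam i) * (θ (i,k) ω - (1/(N:ℝ)) * ∑ l, θ (i,l) ω) := by ring
        rw [e2, mul_pow, Real.sq_sqrt (hlam i)]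
      rw [Finset.sum_congr rfl fun k _ => e1 k, ← Finset.mul_sum]
      ring
    have hd : ∀ a b, C a b - DN ω a b = ∑ i, (lam i - c i ω) * (u i a * u i b) := by
      intro a b; rw [hC a b, hDN ω a b, ← Finset.sum_sub_distrib]
      exact Finset.sum_congr rfl fun i _ => by ring
    have hfrob : ∑ a, ∑ b, (C a b - DN ω a b)^2 = ∑ i, (lam i - c i ω)^2 := by
      have e1 : ∀ a b, (C a b - DN ω a b)^2
          = ∑ i, ∑ j, ((lam i - c i ω) * (lam j - c j ω) * (u i a * u j a))
              * (u i b * u j b) := by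
        intro a b; rw [hd a b, sq, Finset.sum_mul_sum]
        exact Finset.sum_congr rfl fun i _ => Finset.sum_congr rfl fun j _ => by ring
      have e2 : ∀ a, ∑ b, (C a b - DN ω a b)^2
          = ∑ i, (lam i - c i ω) * (lam i - c i ω) * (u i a * u i a) := by
        intro a
        rw [Finset.sum_congr rfl fun b _ => e1 a b, Finset.sum_comm]
        refine Finset.sum_congr rfl fun i _ => ?_
        rw [Finset.sum_comm]
        have e3 : ∀ j, ∑ b, ((lam i - c i ω) * (lam j - c j ω) * (u i a * u j a))
            * (u i b * u j b)
            = ((lam i - c i ω) * (lam j - c j ω) * (u i a * u j a))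
              * (if i = j then (1:ℝ) else 0) := by
          intro j; rw [← Finset.mul_sum, horth]
        rw [Finset.sum_congr rfl fun j _ => e3 j]
        simp only [mul_ite, mul_one, mul_zero]
        rw [Finset.sum_ite_eq]
        simp
      rw [Finset.sum_congr rfl fun a _ => e2 a, Finset.sum_comm]
      refine Finset.sum_congr rfl fun i _ => ?_
      rw [← Finset.mul_sum, horth, if_pos rfl, mul_one]
      ring
    rw [hfrob]
    refine Finset.sum_congr rfl fun i _ => ?_
    rw [hci i]
    ring
  rw [show (fun ω => ∑ a, ∑ b, (C a b - DN ω a b) ^ 2)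
      = fun ω => ∑ i, lam i ^ 2 *
        ((1/((N:ℝ)-1)) * ∑ k, (θ (i,k) ω - (1/(N:ℝ)) * ∑ l, θ (i,l) ω)^2 - 1)^2
    from funext hpt]
  rw [integral_finset_sum _ (fun i _ => ((hkey i).1.const_mul (lam i ^ 2)))]
  rw [Finset.sum_congr rfl fun i (_ : i ∈ Finset.univ) => integral_const_mul (lam i ^ 2) _]
  rw [Finset.sum_congr rfl fun i (_ : i ∈ Finset.univ) => by rw [(hkey i).2]]
  rw [Finset.mul_sum]
  exact Finset.sum_congr rfl fun i _ => by ring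
end

section
/- Let N ≥ 2 and let X^1, …, X^N be the random vectors defined from the i.i.d. standard normal family θ_{i,k} by X^k = Σ_{i=1}^n λ_i^{1/2} θ_{i,k} u_i. Then the spectral diagonal approximation has expected squared Frobenius error no larger than that of the sample covariance: E[‖C − D^N‖_F²] ≤ E[‖C − C^N‖_F²], where C = Σ_{i=1}^n λ_i u_i u_iᵀ. -/
open MeasureTheory ProbabilityTheory Finset
open scoped ENNReal NNReal

private lemma gauss_memLp4 : MemLp (fun x : ℝ => x) 4 (gaussianReal 0 1) := by
  have hr : ∀ y : ℝ, y ^ (4:ℝ) = y ^ (4:ℕ) := by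
    intro y
    rw [show (4:ℝ) = ((4:ℕ):ℝ) by push_cast; ring, Real.rpow_natCast]
  have hint4 : Integrable (fun x : ℝ => ‖x‖ ^ ((4:ℝ≥0∞).toReal)) (gaussianReal 0 1) := by
    rw [gaussianReal_of_var_ne_zero 0 one_ne_zero,
      integrable_withDensity_iff (measurable_gaussianPDF 0 1)
        (ae_of_all _ fun x => ENNReal.ofReal_lt_top)]
    have key : Integrable (fun x : ℝ => x ^ (4:ℝ) * Real.exp (-(1/2) * x ^ 2)) :=
      integrable_rpow_mul_exp_neg_mul_sq (by norm_num) (by norm_num)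
    have h2 := key.const_mul ((Real.sqrt (2 * Real.pi))⁻¹)
    apply h2.congr
    refine ae_of_all _ fun x => ?_
    show (Real.sqrt (2 * Real.pi))⁻¹ * (x ^ (4:ℝ) * Real.exp (-(1/2) * x ^ 2))
        = ‖x‖ ^ ((4:ℝ≥0∞).toReal) * (gaussianPDF 0 1 x).toReal
    rw [gaussianPDF, ENNReal.toReal_ofReal (gaussianPDFReal_nonneg _ _ _),
      ProbabilityTheory.gaussianPDFReal,
      show ((4:ℝ≥0∞).toReal) = (4:ℝ) by norm_num, hr, hr, Real.norm_eq_abs,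
      (by decide : Even 4).pow_abs x]
    push_cast
    rw [mul_one, sub_zero]
    ring_nf
  have h1 : MemLp (fun x : ℝ => ‖(fun y : ℝ => y) x‖ ^ ((4:ℝ≥0∞).toReal)) ((4:ℝ≥0∞) / 4)
      (gaussianReal 0 1) := by
    rw [ENNReal.div_self (by norm_num) (by norm_num), memLp_one_iff_integrable]
    exact hint4
  exact (memLp_norm_rpow_iff aestronglyMeasurable_id (by norm_num) (by norm_num)).mp h1

private lemma parseval_aux {n : ℕ} (u : Fin n → Fin n → ℝ)
    (horth : ∀ i j, (∑ a, u i a * u j a) = if i = j then (1 : ℝ) else 0)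
    (w : Fin n → ℝ) : ∑ a, (∑ i, w i * u i a) ^ 2 = ∑ i, w i ^ 2 := by
  have h : ∀ a, (∑ i, w i * u i a) ^ 2 = ∑ i, ∑ j, (w i * w j) * (u i a * u j a) := by
    intro a
    rw [sq, Finset.sum_mul_sum]
    exact Finset.sum_congr rfl fun i _ => Finset.sum_congr rfl fun j _ => by ring
  calc ∑ a, (∑ i, w i * u i a) ^ 2
      = ∑ a, ∑ i, ∑ j, (w i * w j) * (u i a * u j a) := by simp only [h]
    _ = ∑ i, ∑ j, (w i * w j) * ∑ a, (u i a * u j a) := by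
        rw [Finset.sum_comm]
        refine Finset.sum_congr rfl fun i _ => ?_
        rw [Finset.sum_comm]
        exact Finset.sum_congr rfl fun j _ => (Finset.mul_sum _ _ _).symm
    _ = ∑ i, w i ^ 2 := by
        simp only [horth, mul_ite, mul_one, mul_zero, Finset.sum_ite_eq, Finset.mem_univ,
          if_true]
        exact Finset.sum_congr rfl fun i _ => (pow_two (w i)).symm

private lemma parseval2_aux {n : ℕ} (u : Fin n → Fin n → ℝ)
    (horth : ∀ i j, (∑ a, u i a * u j a) = if i = j then (1 : ℝ) else 0)
    (q : Fin n → Fin n → ℝ) :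
    ∑ a, ∑ b, (∑ i, ∑ j, q i j * u i a * u j b) ^ 2 = ∑ i, ∑ j, q i j ^ 2 := by
  have h1 : ∀ a b, (∑ i, ∑ j, q i j * u i a * u j b)
      = ∑ j, (∑ i, q i j * u i a) * u j b := by
    intro a b
    rw [Finset.sum_comm]
    refine Finset.sum_congr rfl fun j _ => ?_
    rw [Finset.sum_mul]
  simp only [h1]
  have h2 : ∀ a, ∑ b, (∑ j, (∑ i, q i j * u i a) * u j b) ^ 2
      = ∑ j, (∑ i, q i j * u i a) ^ 2 := fun a => parseval_aux u horth _
  simp only [h2]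
  calc ∑ a, ∑ j, (∑ i, q i j * u i a) ^ 2
      = ∑ j, ∑ a, (∑ i, q i j * u i a) ^ 2 := Finset.sum_comm
    _ = ∑ j, ∑ i, q i j ^ 2 := Finset.sum_congr rfl fun j _ => parseval_aux u horth _
    _ = ∑ i, ∑ j, q i j ^ 2 := Finset.sum_comm

/-- the spectral diagonal approximation has expected squared Frobenius
error no larger than the sample covariance. -/
theorem spectral_diagonal_error_le_sample_cov_error
    {Ω : Type*} [MeasureSpace Ω] [IsProbabilityMeasure (ℙ : Measure Ω)]
    (n N : ℕ) (hn : 1 ≤ n) (hN : 2 ≤ N)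
    (θ : Fin n × Fin N → Ω → ℝ)
    (hmeas : ∀ p, Measurable (θ p))
    (hindep : iIndepFun θ ℙ)
    (hgauss : ∀ p, Measure.map (θ p) ℙ = gaussianReal 0 1)
    (u : Fin n → Fin n → ℝ)
    (horth : ∀ i j, (∑ a, u i a * u j a) = if i = j then (1 : ℝ) else 0)
    (lam : Fin n → ℝ) (hlam : ∀ i, 0 ≤ lam i)
    (X : Fin N → Ω → Fin n → ℝ)
    (hX : ∀ k ω a, X k ω a = ∑ i, Real.sqrt (lam i) * θ (i, k) ω * u i a)
    (Xbar : Ω → Fin n → ℝ)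
    (hXbar : ∀ ω a, Xbar ω a = (1 / (N : ℝ)) * ∑ k, X k ω a)
    (CN : Ω → Matrix (Fin n) (Fin n) ℝ)
    (hCN : ∀ ω a b, CN ω a b =
      (1 / ((N : ℝ) - 1)) * ∑ k, (X k ω a - Xbar ω a) * (X k ω b - Xbar ω b))
    (c : Fin n → Ω → ℝ)
    (hc : ∀ i ω, c i ω = (1 / ((N : ℝ) - 1)) *
      ∑ k, ((∑ a, u i a * X k ω a) - (∑ a, u i a * Xbar ω a)) ^ 2)
    (DN : Ω → Matrix (Fin n) (Fin n) ℝ)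
    (hDN : ∀ ω a b, DN ω a b = ∑ i, c i ω * u i a * u i b)
    (C : Matrix (Fin n) (Fin n) ℝ)
    (hC : ∀ a b, C a b = ∑ i, lam i * u i a * u i b) :
    ∫ ω, (∑ a, ∑ b, (C a b - DN ω a b) ^ 2) ∂ℙ
      ≤ ∫ ω, (∑ a, ∑ b, (C a b - CN ω a b) ^ 2) ∂ℙ := by
  classical
  -- the fluctuation coefficients in the eigenbasis
  set t : Fin N → Fin n → Ω → ℝ := fun k i ω =>
    Real.sqrt (lam i) * θ (i, k) ω
      - (1 / (N : ℝ)) * ∑ k', Real.sqrt (lam i) * θ (i, k') ω with ht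
  have hd : ∀ ω k a, X k ω a - Xbar ω a = ∑ i, t k i ω * u i a := by
    intro ω k a
    simp only [hX, hXbar, ht, sub_mul, Finset.sum_sub_distrib]
    congr 1
    simp only [Finset.mul_sum, Finset.sum_mul]
    rw [Finset.sum_comm]
    exact Finset.sum_congr rfl fun i _ => Finset.sum_congr rfl fun k' _ => by ring
  -- the sample covariance coefficients in the eigenbasis
  set m : Fin n → Fin n → Ω → ℝ := fun i j ω =>
    (1 / ((N : ℝ) - 1)) * ∑ k, t k i ω * t k j ω with hm
  have hCN' : ∀ ω a b, CN ω a b = ∑ i, ∑ j, m i j ω * u i a * u j b := by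
    intro ω a b
    rw [hCN]
    simp only [hd, Finset.sum_mul_sum, hm]
    simp only [Finset.mul_sum, Finset.sum_mul]
    rw [Finset.sum_comm]
    refine Finset.sum_congr rfl fun i _ => ?_
    rw [Finset.sum_comm]
    exact Finset.sum_congr rfl fun j _ => Finset.sum_congr rfl fun k _ => by ring
  -- the spectral variances are the diagonal coefficients
  have hcm : ∀ i ω, c i ω = m i i ω := by
    intro i ω
    rw [hc, hm]
    congr 1
    refine Finset.sum_congr rfl fun k _ => ?_
    have key : (∑ a, u i a * X k ω a) - ∑ a, u i a * Xbar ω a = t k i ω := by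
      rw [← Finset.sum_sub_distrib]
      have h1 : ∀ a, u i a * X k ω a - u i a * Xbar ω a
          = u i a * (X k ω a - Xbar ω a) := fun a => by ring
      simp only [h1, hd, Finset.mul_sum]
      rw [Finset.sum_comm]
      have h2 : ∀ j, ∑ a, u i a * (t k j ω * u j a) = t k j ω * ∑ a, u i a * u j a := by
        intro j
        rw [Finset.mul_sum]
        exact Finset.sum_congr rfl fun a _ => by ring
      simp only [h2, horth, mul_ite, mul_one, mul_zero, Finset.sum_ite_eq, Finset.mem_univ,
        if_true]
    rw [key, pow_two]
  -- pointwise inequality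
  have hpt : ∀ ω, (∑ a, ∑ b, (C a b - DN ω a b) ^ 2)
      ≤ ∑ a, ∑ b, (C a b - CN ω a b) ^ 2 := by
    intro ω
    have hq : ∀ a b, C a b - CN ω a b
        = ∑ i, ∑ j, ((if i = j then lam i else 0) - m i j ω) * u i a * u j b := by
      intro a b
      rw [hC, hCN' ω a b, ← Finset.sum_sub_distrib]
      refine Finset.sum_congr rfl fun i _ => ?_
      simp only [sub_mul, ite_mul, zero_mul, Finset.sum_sub_distrib, Finset.sum_ite_eq,
        Finset.mem_univ, if_true]
    have hq' : ∀ a b, C a b - DN ω a b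
        = ∑ i, ∑ j, (if i = j then lam i - m i i ω else 0) * u i a * u j b := by
      intro a b
      rw [hC, hDN, ← Finset.sum_sub_distrib]
      refine Finset.sum_congr rfl fun i _ => ?_
      simp only [ite_mul, zero_mul, Finset.sum_ite_eq, Finset.mem_univ, if_true, hcm]
      ring
    calc ∑ a, ∑ b, (C a b - DN ω a b) ^ 2
        = ∑ i, ∑ j, (if i = j then lam i - m i i ω else 0) ^ 2 := by
          simp only [hq']; exact parseval2_aux u horth _
      _ = ∑ i, (lam i - m i i ω) ^ 2 := by
          have h3 : ∀ i j : Fin n, ((if i = j then lam i - m i i ω else 0)) ^ 2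
              = if i = j then (lam i - m i i ω) ^ 2 else 0 := by
            intro i j; split <;> simp
          simp only [h3, Finset.sum_ite_eq, Finset.mem_univ, if_true]
      _ ≤ ∑ i, ∑ j, ((if i = j then lam i else 0) - m i j ω) ^ 2 := by
          refine Finset.sum_le_sum fun i _ => ?_
          have h4 : (lam i - m i i ω) ^ 2
              = ((if i = i then lam i else 0) - m i i ω) ^ 2 := by simp
          rw [h4]
          exact Finset.single_le_sum (f := fun j => ((if i = j then lam i else 0) - m i j ω) ^ 2)
            (fun j _ => sq_nonneg _) (Finset.mem_univ i)
      _ = ∑ a, ∑ b, (C a b - CN ω a b) ^ 2 := by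
          simp only [hq]; exact (parseval2_aux u horth _).symm
  -- integrability of the right-hand side
  have hθ4 : ∀ p, MemLp (θ p) 4 ℙ := by
    intro p
    have h := gauss_memLp4
    rw [← hgauss p] at h
    exact (memLp_map_measure_iff aestronglyMeasurable_id (hmeas p).aemeasurable).mp h
  have ht4 : ∀ k i, MemLp (fun ω => t k i ω) 4 ℙ := by
    intro k i
    refine MemLp.sub ((hθ4 (i, k)).const_mul _) ?_
    exact (memLp_finset_sum _ fun k' _ => (hθ4 (i, k')).const_mul _).const_mul _
  have hd4 : ∀ k a, MemLp (fun ω => X k ω a - Xbar ω a) 4 ℙ := by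
    intro k a
    have he : (fun ω => X k ω a - Xbar ω a) = fun ω => ∑ i, u i a * t k i ω := by
      funext ω
      rw [hd ω k a]
      exact Finset.sum_congr rfl fun i _ => by ring
    rw [he]
    exact memLp_finset_sum _ fun i _ => (ht4 k i).const_mul _
  have hprod : ∀ k (a b : Fin n),
      MemLp (fun ω => (X k ω a - Xbar ω a) * (X k ω b - Xbar ω b)) 2 ℙ := by
    intro k a b
    have h := (hd4 k b).smul (hd4 k a) (p := 4) (q := 4) (r := 2)
      (hpqr := ⟨by
        refine (ENNReal.toReal_eq_toReal_iff' (by simp) (by simp)).mp ?_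
        rw [ENNReal.toReal_add (by simp) (by simp), ENNReal.toReal_inv, ENNReal.toReal_inv]
        norm_num⟩)
    exact h
  have hentry2 : ∀ a b : Fin n, MemLp (fun ω => C a b - CN ω a b) 2 ℙ := by
    intro a b
    refine MemLp.sub (memLp_const _) ?_
    have he : (fun ω => CN ω a b) = fun ω =>
        (1 / ((N : ℝ) - 1)) * ∑ k, (X k ω a - Xbar ω a) * (X k ω b - Xbar ω b) :=
      funext fun ω => hCN ω a b
    rw [he]
    exact (memLp_finset_sum _ fun k _ => hprod k a b).const_mul _
  have hint : Integrable (fun ω => ∑ a, ∑ b, (C a b - CN ω a b) ^ 2) ℙ :=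
    integrable_finset_sum _ fun a _ =>
      integrable_finset_sum _ fun b _ => (hentry2 a b).integrable_sq
  refine integral_mono_of_nonneg ?_ hint ?_
  · exact ae_of_all _ fun ω =>
      Finset.sum_nonneg fun a _ => Finset.sum_nonneg fun b _ => sq_nonneg _
  · exact ae_of_all _ fun ω => hpt ω
end

section
/- For real α > 1, define R(α) = (2 Σ_{k=1}^∞ k^{−2α}) / (Σ_{k=1}^∞ k^{−2α} + (Σ_{k=1}^∞ k^{−α})²), the ratio of the expected squared error of the spectral diagonal approximation to that of the sample covariance when the covariance eigenvalues obey the power law λ_k = k^{−α}. Then R(α) → 0 as α → 1 from the right. -/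
open Filter

lemma summable_pnat_rpow {α : ℝ} (hα : 1 < α) :
    Summable (fun k : ℕ+ => (k : ℝ) ^ (-α)) :=
  (Real.summable_nat_rpow.2 (by linarith)).comp_injective
    (fun a b h => PNat.coe_injective h)

lemma tsum_S_atTop :
    Tendsto (fun α : ℝ => ∑' k : ℕ+, (k : ℝ) ^ (-α)) (nhdsWithin 1 (Set.Ioi 1)) atTop := by
  rw [tendsto_atTop]
  intro M
  obtain ⟨n, hn⟩ := (tendsto_atTop.1 Real.tendsto_sum_range_one_div_nat_succ_atTop (M + 1)).exists
  set g : ℝ → ℝ := fun α => ∑ i ∈ Finset.range n, ((i : ℝ) + 1) ^ (-α) with hg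
  have hgcont : Continuous g := by
    apply continuous_finset_sum
    intro i _
    exact continuous_iff_continuousAt.2 fun x =>
      (Real.continuousAt_const_rpow (by positivity)).comp continuousAt_neg
  have hg1 : M < g 1 := by
    have : g 1 = ∑ i ∈ Finset.range n, (1 / ((i : ℝ) + 1)) := by
      apply Finset.sum_congr rfl
      intro i _
      rw [Real.rpow_neg_one, one_div]
    rw [this]; linarith
  have hev : ∀ᶠ α in nhdsWithin 1 (Set.Ioi 1), M < g α :=
    eventually_nhdsWithin_of_eventually_nhds
      (hgcont.continuousAt.eventually (eventually_gt_nhds hg1))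
  filter_upwards [hev, self_mem_nhdsWithin] with α hα hα1
  have hα1 : (1 : ℝ) < α := hα1
  have hsum := summable_pnat_rpow hα1
  have hle : g α ≤ ∑' k : ℕ+, (k : ℝ) ^ (-α) := by
    set t : Finset ℕ+ := (Finset.range n).image (fun i => (⟨i + 1, Nat.succ_pos i⟩ : ℕ+))
    have ht : ∑ k ∈ t, (k : ℝ) ^ (-α) = g α := by
      simp only [t]; erw [Finset.sum_image]
      · apply Finset.sum_congr rfl
        intro i _
        simp only [PNat.mk_coe]; push_cast; ring_nf
      · intro a _ b _ h
        simpa using congrArg (fun x : ℕ+ => (x : ℕ)) h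
    calc g α = ∑ k ∈ t, (k : ℝ) ^ (-α) := ht.symm
      _ ≤ _ := sum_le_hasSum t (fun k _ => Real.rpow_nonneg (by positivity) _) hsum.hasSum
  linarith

/-- the error ratio of the spectral diagonal approximation to the sample
covariance under the power law λ_k = k^(-α) tends to 0 as α → 1 from the right. -/
theorem error_ratio_tendsto_zero :
    Tendsto (fun α : ℝ =>
        (2 * ∑' k : ℕ+, (k : ℝ) ^ (-(2 * α))) /
          ((∑' k : ℕ+, (k : ℝ) ^ (-(2 * α))) + (∑' k : ℕ+, (k : ℝ) ^ (-α)) ^ 2))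
      (nhdsWithin 1 (Set.Ioi 1)) (nhds 0) := by
  set C : ℝ := ∑' k : ℕ+, (k : ℝ) ^ (-(2 : ℝ)) with hC
  have hsum2 : Summable (fun k : ℕ+ => (k : ℝ) ^ (-(2 : ℝ))) :=
    summable_pnat_rpow one_lt_two
  have hupper : Tendsto (fun α : ℝ => 2 * C / (∑' k : ℕ+, (k : ℝ) ^ (-α)) ^ 2)
      (nhdsWithin 1 (Set.Ioi 1)) (nhds 0) := by
    apply Tendsto.div_atTop (tendsto_const_nhds)
    simpa [sq] using tsum_S_atTop.atTop_mul_atTop₀ tsum_S_atTop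
  apply tendsto_of_tendsto_of_tendsto_of_le_of_le' tendsto_const_nhds hupper
  · filter_upwards [self_mem_nhdsWithin] with α hα
    have hα : (1 : ℝ) < α := hα
    apply div_nonneg
    · have : 0 ≤ ∑' k : ℕ+, (k : ℝ) ^ (-(2 * α)) :=
        tsum_nonneg fun k => Real.rpow_nonneg (by positivity) _
      linarith
    · have h1 : 0 ≤ ∑' k : ℕ+, (k : ℝ) ^ (-(2 * α)) :=
        tsum_nonneg fun k => Real.rpow_nonneg (by positivity) _
      nlinarith [sq_nonneg (∑' k : ℕ+, (k : ℝ) ^ (-α))]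
  · filter_upwards [self_mem_nhdsWithin] with α hα
    have hα : (1 : ℝ) < α := hα
    have hsumα := summable_pnat_rpow hα
    have hsum2α : Summable (fun k : ℕ+ => (k : ℝ) ^ (-(2 * α))) :=
      summable_pnat_rpow (by linarith)
    have hnum : (∑' k : ℕ+, (k : ℝ) ^ (-(2 * α))) ≤ C := by
      apply Summable.tsum_le_tsum _ hsum2α hsum2
      intro k
      apply Real.rpow_le_rpow_of_exponent_le
      · exact_mod_cast k.one_le
      · linarith
    have hnum0 : 0 ≤ ∑' k : ℕ+, (k : ℝ) ^ (-(2 * α)) :=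
      tsum_nonneg fun k => Real.rpow_nonneg (by positivity) _
    have hS1 : (1 : ℝ) ≤ ∑' k : ℕ+, (k : ℝ) ^ (-α) := by
      have := Summable.le_tsum hsumα 1 (fun k _ => Real.rpow_nonneg (by positivity) _)
      simpa [Real.one_rpow] using this
    have hSpos : (0 : ℝ) < (∑' k : ℕ+, (k : ℝ) ^ (-α)) ^ 2 := by positivity
    apply div_le_div₀ (by linarith) (by linarith) hSpos
    linarith
end
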